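/- Let A ∈ (1,3), write A = 1 + 2θ with θ ∈ (0,1). Then for −1 < μ < 1, I_A(μ) = (2^{−θ}/(Γ(θ)Γ(1−θ))) ∫_μ^1 (λ−μ)^{−θ}(1−λ²)^{θ−1} dλ, and lim_{μ→1⁻} I_A(μ) = 1/2. -/

import Mathlib

open Real MeasureTheory Filter Topology

/-- The kernel after the affine substitution `λ = (1-μ)σ + μ`. -/
noncomputable def Fker (θ μ σ : ℝ) : ℝ :=
  σ ^ (-θ) * (1 - σ) ^ (θ - 1) * ((1 + μ) + (1 - μ) * σ) ^ (θ - 1)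

/-- Real Beta-integral identity specialized to exponents `-θ`, `θ-1`. -/
lemma beta_aux {θ : ℝ} (hθ0 : 0 < θ) (hθ1 : θ < 1) :
    IntegrableOn (fun x : ℝ => x ^ (-θ) * (1 - x) ^ (θ - 1)) (Set.Ioo 0 1) volume ∧
    ∫ x in Set.Ioo (0:ℝ) 1, x ^ (-θ) * (1 - x) ^ (θ - 1)
      = Real.Gamma (1 - θ) * Real.Gamma θ := by
  have hu : 0 < (((1 - θ : ℝ) : ℂ)).re := by simpa using (by linarith : (0:ℝ) < 1 - θ)
  have hv : 0 < (((θ : ℝ) : ℂ)).re := by simpa using hθ0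
  have hpt : ∀ x ∈ Set.Icc (0:ℝ) 1,
      (x:ℂ) ^ (((1 - θ : ℝ) : ℂ) - 1) * (1 - (x:ℂ)) ^ (((θ : ℝ) : ℂ) - 1)
        = ((x ^ (-θ) * (1 - x) ^ (θ - 1) : ℝ) : ℂ) := by
    intro x hx
    have h1 : ((1 - θ : ℝ) : ℂ) - 1 = ((-θ : ℝ) : ℂ) := by push_cast; ring
    have h2 : ((θ : ℝ) : ℂ) - 1 = ((θ - 1 : ℝ) : ℂ) := by push_cast; ring
    have h3 : (1 - (x:ℂ)) = ((1 - x : ℝ) : ℂ) := by push_cast; ring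
    rw [h1, h2, h3, ← Complex.ofReal_cpow hx.1 (-θ),
      ← Complex.ofReal_cpow (by linarith [hx.2]) (θ - 1), ← Complex.ofReal_mul]
  have hconv := Complex.betaIntegral_convergent hu hv
  have hIoc : IntegrableOn
      (fun x : ℝ => (x:ℂ) ^ (((1 - θ : ℝ) : ℂ) - 1) * (1 - (x:ℂ)) ^ (((θ : ℝ) : ℂ) - 1))
      (Set.Ioc 0 1) volume :=
    (intervalIntegrable_iff_integrableOn_Ioc_of_le zero_le_one).mp hconv
  have hIooC : IntegrableOn (fun x : ℝ => ((x ^ (-θ) * (1 - x) ^ (θ - 1) : ℝ) : ℂ))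
      (Set.Ioo 0 1) volume := by
    refine (hIoc.mono_set Set.Ioo_subset_Ioc_self).congr_fun ?_ measurableSet_Ioo
    intro x hx
    exact hpt x ⟨hx.1.le, hx.2.le⟩
  have hInt : IntegrableOn (fun x : ℝ => x ^ (-θ) * (1 - x) ^ (θ - 1)) (Set.Ioo 0 1) volume := by
    simpa [IntegrableOn] using hIooC.re
  have hval := Complex.Gamma_mul_Gamma_eq_betaIntegral hu hv
  have hval2 : Complex.betaIntegral ((1 - θ : ℝ) : ℂ) ((θ : ℝ) : ℂ)
      = ((∫ x in Set.Ioo (0:ℝ) 1, x ^ (-θ) * (1 - x) ^ (θ - 1) : ℝ) : ℂ) := by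
    rw [Complex.betaIntegral,
      intervalIntegral.integral_congr (g := fun x : ℝ => ((x ^ (-θ) * (1 - x) ^ (θ - 1) : ℝ) : ℂ))
        (fun x hx => hpt x (by simpa [Set.uIcc_of_le (zero_le_one' ℝ)] using hx)),
      intervalIntegral.integral_ofReal]
    congr 1
    rw [intervalIntegral.integral_of_le zero_le_one, MeasureTheory.integral_Ioc_eq_integral_Ioo]
  rw [hval2] at hval
  have huv : ((1 - θ : ℝ) : ℂ) + ((θ : ℝ) : ℂ) = 1 := by push_cast; ring
  rw [huv, Complex.Gamma_one, one_mul, Complex.Gamma_ofReal, Complex.Gamma_ofReal,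
    ← Complex.ofReal_mul] at hval
  exact ⟨hInt, (Complex.ofReal_inj.mp hval).symm⟩

/-- For `A = 1 + 2θ` with `θ ∈ (0,1)`, the kernel `I_A` restricted to
`(-1,1)` has the explicit form
`(2^{-θ}/(Γ(θ)Γ(1-θ))) ∫_μ^1 (λ-μ)^{-θ}(1-λ²)^{θ-1} dλ`,
and `I_A(μ) → 1/2` as `μ → 1⁻`. -/
theorem stmt9 (A θ : ℝ) (hθ0 : 0 < θ) (hθ1 : θ < 1) (hA : A = 1 + 2 * θ)
    (IA : ℝ → ℝ)
    (hIA : ∀ ν : ℝ, IA ν =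
      (2 : ℝ) ^ ((1 - A) / 2) / Real.Gamma ((A - 1) / 2) *
        ∫ l in Set.Ioo (-1 : ℝ) 1,
          (if 0 < l - ν then (l - ν) ^ ((1 - A) / 2) / Real.Gamma ((1 - A) / 2 + 1) else 0) *
            (1 - l ^ 2) ^ ((A - 3) / 2)) :
    (∀ μ ∈ Set.Ioo (-1 : ℝ) 1,
      IA μ = (2 : ℝ) ^ (-θ) / (Real.Gamma θ * Real.Gamma (1 - θ)) *
        ∫ l in Set.Ioo μ 1, (l - μ) ^ (-θ) * (1 - l ^ 2) ^ (θ - 1)) ∧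
    Tendsto IA (𝓝[<] 1) (𝓝 (1 / 2)) := by
  have hθ1' : (0:ℝ) < 1 - θ := by linarith
  have hΓθ : 0 < Real.Gamma θ := Real.Gamma_pos_of_pos hθ0
  have hΓθ' : 0 < Real.Gamma (1 - θ) := Real.Gamma_pos_of_pos hθ1'
  obtain ⟨hBint, hBval⟩ := beta_aux hθ0 hθ1
  have e1 : (1 - A) / 2 = -θ := by rw [hA]; ring
  have e2 : (A - 1) / 2 = θ := by rw [hA]; ring
  have e3 : (A - 3) / 2 = θ - 1 := by rw [hA]; ring
  -- Part 1: the explicit formula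
  have hformula : ∀ μ ∈ Set.Ioo (-1:ℝ) 1,
      IA μ = (2 : ℝ) ^ (-θ) / (Real.Gamma θ * Real.Gamma (1 - θ)) *
        ∫ l in Set.Ioo μ 1, (l - μ) ^ (-θ) * (1 - l ^ 2) ^ (θ - 1) := by
    intro μ hμ
    rw [hIA μ, e1, e2, e3, show -θ + 1 = 1 - θ from by ring]
    have hind : ∀ l : ℝ,
        (if 0 < l - μ then (l - μ) ^ (-θ) / Real.Gamma (1 - θ) else 0) * (1 - l ^ 2) ^ (θ - 1)
          = Set.indicator (Set.Ioi μ)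
              (fun l => (Real.Gamma (1 - θ))⁻¹ * ((l - μ) ^ (-θ) * (1 - l ^ 2) ^ (θ - 1))) l := by
      intro l
      rw [Set.indicator_apply]
      by_cases h : μ < l
      · rw [if_pos (by simpa [sub_pos] using h), if_pos (by simpa using h)]
        ring
      · rw [if_neg (by simpa [sub_pos] using h), if_neg (by simpa using h), zero_mul]
    simp_rw [hind]
    rw [MeasureTheory.setIntegral_indicator measurableSet_Ioi]
    have hset : Set.Ioo (-1:ℝ) 1 ∩ Set.Ioi μ = Set.Ioo μ 1 := by
      ext x
      simp only [Set.mem_inter_iff, Set.mem_Ioo, Set.mem_Ioi]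
      constructor
      · rintro ⟨⟨_, h2⟩, h3⟩; exact ⟨h3, h2⟩
      · rintro ⟨h1, h2⟩; exact ⟨⟨lt_trans hμ.1 h1, h2⟩, h1⟩
    rw [hset, MeasureTheory.integral_const_mul, div_eq_mul_inv, div_eq_mul_inv, mul_inv]
    ring
  refine ⟨hformula, ?_⟩
  -- substitution λ = (1-μ)σ + μ
  have hJK : ∀ μ ∈ Set.Ioo (-1:ℝ) 1,
      (∫ l in Set.Ioo μ 1, (l - μ) ^ (-θ) * (1 - l ^ 2) ^ (θ - 1))
        = ∫ σ in Set.Ioo (0:ℝ) 1, Fker θ μ σ := by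
    intro μ hμ
    have hc : (0:ℝ) < 1 - μ := by linarith [hμ.2]
    have h1 : (∫ l in Set.Ioo μ 1, (l - μ) ^ (-θ) * (1 - l ^ 2) ^ (θ - 1))
        = ∫ l in μ..1, (l - μ) ^ (-θ) * (1 - l ^ 2) ^ (θ - 1) := by
      rw [intervalIntegral.integral_of_le hμ.2.le, MeasureTheory.integral_Ioc_eq_integral_Ioo]
    have h2 : (∫ l in μ..1, (l - μ) ^ (-θ) * (1 - l ^ 2) ^ (θ - 1))
        = (1 - μ) • ∫ x in (0:ℝ)..1,
            ((1 - μ) * x + μ - μ) ^ (-θ) * (1 - ((1 - μ) * x + μ) ^ 2) ^ (θ - 1) := by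
      rw [intervalIntegral.smul_integral_comp_mul_add
        (f := fun l => (l - μ) ^ (-θ) * (1 - l ^ 2) ^ (θ - 1)) (1 - μ) μ]
      norm_num
    have h3 : (∫ x in (0:ℝ)..1,
          ((1 - μ) * x + μ - μ) ^ (-θ) * (1 - ((1 - μ) * x + μ) ^ 2) ^ (θ - 1))
        = ∫ σ in Set.Ioo (0:ℝ) 1,
            ((1 - μ) * σ + μ - μ) ^ (-θ) * (1 - ((1 - μ) * σ + μ) ^ 2) ^ (θ - 1) := by
      rw [intervalIntegral.integral_of_le zero_le_one, MeasureTheory.integral_Ioc_eq_integral_Ioo]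
    have h4 : ∀ σ ∈ Set.Ioo (0:ℝ) 1,
        ((1 - μ) * σ + μ - μ) ^ (-θ) * (1 - ((1 - μ) * σ + μ) ^ 2) ^ (θ - 1)
          = (1 - μ)⁻¹ * Fker θ μ σ := by
      intro σ hσ
      have hσ0 : (0:ℝ) ≤ σ := hσ.1.le
      have hσ1 : (0:ℝ) ≤ 1 - σ := by linarith [hσ.2]
      have hplus : (0:ℝ) ≤ (1 + μ) + (1 - μ) * σ := by nlinarith [hμ.1]
      have key1 : (1 - μ) * σ + μ - μ = (1 - μ) * σ := by ring
      have key2 : 1 - ((1 - μ) * σ + μ) ^ 2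
          = ((1 - μ) * (1 - σ)) * ((1 + μ) + (1 - μ) * σ) := by ring
      have hpow : (1 - μ) ^ (-θ) * (1 - μ) ^ (θ - 1) = (1 - μ)⁻¹ := by
        rw [← Real.rpow_add hc, show -θ + (θ - 1) = -1 from by ring, Real.rpow_neg_one]
      rw [key1, key2, Real.mul_rpow hc.le hσ0,
        Real.mul_rpow (mul_nonneg hc.le hσ1) hplus, Real.mul_rpow hc.le hσ1]
      calc (1 - μ) ^ (-θ) * σ ^ (-θ) *
            ((1 - μ) ^ (θ - 1) * (1 - σ) ^ (θ - 1) * ((1 + μ) + (1 - μ) * σ) ^ (θ - 1))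
          = ((1 - μ) ^ (-θ) * (1 - μ) ^ (θ - 1)) * Fker θ μ σ := by unfold Fker; ring
        _ = (1 - μ)⁻¹ * Fker θ μ σ := by rw [hpow]
    rw [h1, h2, h3, MeasureTheory.setIntegral_congr_fun measurableSet_Ioo h4,
      MeasureTheory.integral_const_mul, smul_eq_mul, ← mul_assoc, mul_inv_cancel₀ hc.ne', one_mul]
  -- dominated convergence
  have hmeas : ∀ μ ∈ Set.Ioo (0:ℝ) 1,
      AEStronglyMeasurable (Fker θ μ) (volume.restrict (Set.Ioo (0:ℝ) 1)) := by
    intro μ hμ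
    apply ContinuousOn.aestronglyMeasurable _ measurableSet_Ioo
    apply ContinuousOn.mul
    · apply ContinuousOn.mul
      · exact fun σ hσ => (continuous_id.continuousWithinAt).rpow_const (Or.inl hσ.1.ne')
      · exact fun σ hσ => ((continuous_const.sub continuous_id).continuousWithinAt).rpow_const
          (Or.inl (by simp only [Pi.sub_apply, id_eq]; intro h; have := hσ.2; nlinarith [sub_eq_zero.mp h]))
    · refine fun σ hσ => ((continuous_const.add
        (continuous_const.mul continuous_id)).continuousWithinAt).rpow_const (Or.inl ?_)
      have : (0:ℝ) < (1 + μ) + (1 - μ) * σ := by nlinarith [hμ.1, hμ.2, hσ.1, hσ.2]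
      exact this.ne'
  have hlim : Tendsto (fun μ => ∫ σ in Set.Ioo (0:ℝ) 1, Fker θ μ σ) (𝓝[<] (1:ℝ))
      (𝓝 (∫ σ in Set.Ioo (0:ℝ) 1, σ ^ (-θ) * (1 - σ) ^ (θ - 1) * (2:ℝ) ^ (θ - 1))) := by
    apply MeasureTheory.tendsto_integral_filter_of_dominated_convergence
      (bound := fun σ => σ ^ (-θ) * (1 - σ) ^ (θ - 1))
    · filter_upwards [Ioo_mem_nhdsLT_of_mem (⟨by norm_num, le_refl (1:ℝ)⟩ :
        (1:ℝ) ∈ Set.Ioc 0 1)] with μ hμ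
      exact hmeas μ hμ
    · filter_upwards [Ioo_mem_nhdsLT_of_mem (⟨by norm_num, le_refl (1:ℝ)⟩ :
        (1:ℝ) ∈ Set.Ioc 0 1)] with μ hμ
      filter_upwards [MeasureTheory.ae_restrict_mem measurableSet_Ioo] with σ hσ
      have hσ1 : (0:ℝ) ≤ 1 - σ := by linarith [hσ.2]
      have h0 : 0 ≤ σ ^ (-θ) * (1 - σ) ^ (θ - 1) :=
        mul_nonneg (Real.rpow_nonneg hσ.1.le _) (Real.rpow_nonneg hσ1 _)
      have hb1 : (1:ℝ) ≤ (1 + μ) + (1 - μ) * σ := by nlinarith [hμ.1, hμ.2, hσ.1, hσ.2]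
      have hle : ((1 + μ) + (1 - μ) * σ) ^ (θ - 1) ≤ 1 :=
        Real.rpow_le_one_of_one_le_of_nonpos hb1 (by linarith)
      have hge : 0 ≤ ((1 + μ) + (1 - μ) * σ) ^ (θ - 1) :=
        Real.rpow_nonneg (by linarith) _
      unfold Fker
      rw [Real.norm_eq_abs, abs_of_nonneg (mul_nonneg h0 hge)]
      calc σ ^ (-θ) * (1 - σ) ^ (θ - 1) * ((1 + μ) + (1 - μ) * σ) ^ (θ - 1) ≤ σ ^ (-θ) * (1 - σ) ^ (θ - 1) * 1 :=
            mul_le_mul_of_nonneg_left hle h0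
        _ = σ ^ (-θ) * (1 - σ) ^ (θ - 1) := mul_one _
    · exact hBint
    · filter_upwards [MeasureTheory.ae_restrict_mem measurableSet_Ioo] with σ hσ
      have hbase : Tendsto (fun μ : ℝ => (1 + μ) + (1 - μ) * σ) (𝓝[<] (1:ℝ)) (𝓝 2) := by
        have hcont : Continuous fun μ : ℝ => (1 + μ) + (1 - μ) * σ :=
          (continuous_const.add continuous_id).add
            ((continuous_const.sub continuous_id).mul continuous_const)
        have h := hcont.tendsto 1
        have h2 : (1 + (1:ℝ)) + (1 - 1) * σ = 2 := by ring
        rw [h2] at h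
        exact h.mono_left nhdsWithin_le_nhds
      have hpow : Tendsto (fun μ : ℝ => ((1 + μ) + (1 - μ) * σ) ^ (θ - 1)) (𝓝[<] (1:ℝ))
          (𝓝 ((2:ℝ) ^ (θ - 1))) := hbase.rpow_const (Or.inl (by norm_num))
      unfold Fker
      exact hpow.const_mul _
  -- assemble
  have hev : IA =ᶠ[𝓝[<] (1:ℝ)] fun μ =>
      (2 : ℝ) ^ (-θ) / (Real.Gamma θ * Real.Gamma (1 - θ)) *
        ∫ σ in Set.Ioo (0:ℝ) 1, Fker θ μ σ := by
    filter_upwards [Ioo_mem_nhdsLT_of_mem (⟨by norm_num, le_refl (1:ℝ)⟩ :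
      (1:ℝ) ∈ Set.Ioc (-1) 1)] with μ hμ
    rw [hformula μ hμ, hJK μ hμ]
  have hT : Tendsto (fun μ => (2 : ℝ) ^ (-θ) / (Real.Gamma θ * Real.Gamma (1 - θ)) *
      ∫ σ in Set.Ioo (0:ℝ) 1, Fker θ μ σ) (𝓝[<] (1:ℝ))
      (𝓝 ((2 : ℝ) ^ (-θ) / (Real.Gamma θ * Real.Gamma (1 - θ)) *
        ((∫ σ in Set.Ioo (0:ℝ) 1, σ ^ (-θ) * (1 - σ) ^ (θ - 1)) * (2:ℝ) ^ (θ - 1)))) := by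
    have h := hlim
    rw [MeasureTheory.integral_mul_const] at h
    exact h.const_mul _
  have hne : Real.Gamma θ * Real.Gamma (1 - θ) ≠ 0 := (mul_pos hΓθ hΓθ').ne'
  have hval : (2 : ℝ) ^ (-θ) / (Real.Gamma θ * Real.Gamma (1 - θ)) *
      ((∫ σ in Set.Ioo (0:ℝ) 1, σ ^ (-θ) * (1 - σ) ^ (θ - 1)) * (2:ℝ) ^ (θ - 1)) = 1 / 2 := by
    rw [hBval]
    have h2 : (2:ℝ) ^ (-θ) * (2:ℝ) ^ (θ - 1) = 1 / 2 := by
      rw [← Real.rpow_add (by norm_num : (0:ℝ) < 2), show -θ + (θ - 1) = -1 from by ring,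
        Real.rpow_neg_one]
      norm_num
    calc (2 : ℝ) ^ (-θ) / (Real.Gamma θ * Real.Gamma (1 - θ)) *
          (Real.Gamma (1 - θ) * Real.Gamma θ * (2:ℝ) ^ (θ - 1))
        = ((2:ℝ) ^ (-θ) * (2:ℝ) ^ (θ - 1)) *
            ((Real.Gamma θ * Real.Gamma (1 - θ)) / (Real.Gamma θ * Real.Gamma (1 - θ))) := by
          ring
      _ = 1 / 2 := by rw [div_self hne, h2, mul_one]
  rw [hval] at hT
  exact hT.congr' hev.symm
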